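/- Let g be a simple Lie algebra with universal central extension 0 → Ĉ → ĝ → g → 0, and let C be a central ideal of ĝ such that the only derivations of ĝ mapping C into C are the inner derivations. Then Der(ĝ/C) is a simple Lie algebra isomorphic to g. -/

import Mathlib

set_option linter.unusedVariables false

universe u

section SemidirectAux

variable (R L M : Type*) [CommRing R] [LieRing L] [LieAlgebra R L]
  [AddCommGroup M] [Module R M] [LieRingModule L M] [LieModule R L M]

/-- Bracket on the semidirect product `L ⋉ M` (with `M` an abelian ideal). -/
instance sdLieBracket : Bracket (L × M) (L × M) :=
  ⟨fun x y => (⁅x.1, y.1⁆, ⁅x.1, y.2⁆ - ⁅y.1, x.2⁆)⟩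

variable {L M}

@[simp] lemma sd_bracket_fst (x y : L × M) : ⁅x, y⁆.1 = ⁅x.1, y.1⁆ := rfl
@[simp] lemma sd_bracket_snd (x y : L × M) : ⁅x, y⁆.2 = ⁅x.1, y.2⁆ - ⁅y.1, x.2⁆ := rfl

variable (L M)

instance sdLieRing : LieRing (L × M) :=
  { (inferInstance : AddCommGroup (L × M)),
    (inferInstance : Bracket (L × M) (L × M)) with
    add_lie := fun x y z => by
      apply Prod.ext
      · simp [add_lie]
      · simp only [sd_bracket_snd, Prod.fst_add, Prod.snd_add, add_lie, lie_add]
        abel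
    lie_add := fun x y z => by
      apply Prod.ext
      · simp [lie_add]
      · simp only [sd_bracket_snd, Prod.fst_add, Prod.snd_add, add_lie, lie_add]
        abel
    lie_self := fun x => by
      apply Prod.ext
      · simp
      · simp
    leibniz_lie := fun x y z => by
      apply Prod.ext
      · simp only [sd_bracket_fst, Prod.fst_add]
        exact leibniz_lie _ _ _
      · simp only [sd_bracket_snd, sd_bracket_fst, Prod.fst_add, Prod.snd_add, lie_sub, sub_lie]
        have h1 : ⁅x.1, ⁅z.1, y.2⁆⁆ = ⁅⁅x.1, z.1⁆, y.2⁆ + ⁅z.1, ⁅x.1, y.2⁆⁆ :=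
          leibniz_lie _ _ _
        have h2 : ⁅y.1, ⁅z.1, x.2⁆⁆ = ⁅⁅y.1, z.1⁆, x.2⁆ + ⁅z.1, ⁅y.1, x.2⁆⁆ :=
          leibniz_lie _ _ _
        have h3 : ⁅x.1, ⁅y.1, z.2⁆⁆ = ⁅⁅x.1, y.1⁆, z.2⁆ + ⁅y.1, ⁅x.1, z.2⁆⁆ :=
          leibniz_lie _ _ _
        rw [h1, h2, h3]
        abel }

instance sdLieAlgebra : LieAlgebra R (L × M) :=
  { lie_smul := fun t x y => by
      apply Prod.ext
      · simp
      · simp only [sd_bracket_snd, Prod.smul_fst, Prod.smul_snd, lie_smul, smul_lie, smul_sub] }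

/-- First projection as a Lie algebra morphism. -/
def sdFst : L × M →ₗ⁅R⁆ L :=
  { LinearMap.fst R L M with map_lie' := rfl }

@[simp] lemma sdFst_apply (x : L × M) : sdFst R L M x = x.1 := rfl

end SemidirectAux

section QuotAux

variable {R L : Type*} [CommRing R] [LieRing L] [LieAlgebra R L]

/-- The quotient map by a Lie ideal, as a Lie algebra morphism. -/
def lieQuotMk (I : LieIdeal R L) : L →ₗ⁅R⁆ L ⧸ I :=
  { (LieSubmodule.Quotient.mk' I).toLinearMap with map_lie' := fun {_ _} => rfl }

@[simp] lemma lieQuotMk_apply (I : LieIdeal R L) (x : L) :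
    lieQuotMk I x = LieSubmodule.Quotient.mk' I x := rfl

lemma lieQuotMk_surjective (I : LieIdeal R L) : Function.Surjective (lieQuotMk I) :=
  LieSubmodule.Quotient.surjective_mk' I

lemma lieQuotMk_eq_zero (I : LieIdeal R L) {x : L} : lieQuotMk I x = 0 ↔ x ∈ I :=
  LieSubmodule.Quotient.mk_eq_zero I

/-- A Lie algebra isomorphic to a simple Lie algebra is simple. -/
lemma lieIsSimple_of_equiv {R L₁ L₂ : Type*} [CommRing R] [LieRing L₁] [LieAlgebra R L₁]
    [LieRing L₂] [LieAlgebra R L₂] (e : L₁ ≃ₗ⁅R⁆ L₂) (h : LieAlgebra.IsSimple R L₂) :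
    LieAlgebra.IsSimple R L₁ where
  eq_bot_or_eq_top I := by
    rcases h.eq_bot_or_eq_top (LieIdeal.map e.toLieHom I) with hb | ht
    · exact Or.inl (LieIdeal.bot_of_map_eq_bot e.injective hb)
    · right
      rw [eq_top_iff]
      intro x _
      have hx : e.toLieHom x ∈ LieIdeal.map e.toLieHom I := by rw [ht]; trivial
      obtain ⟨⟨y, hy⟩, hyx⟩ := LieIdeal.mem_map_of_surjective e.surjective hx
      have : y = x := e.injective hyx
      exact this ▸ hy
  non_abelian := fun hab => h.non_abelian (e.surjective.isLieAbelian hab)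

end QuotAux

section Perfect

variable {F : Type u} {g ghat : Type u} [Field F]
  [LieRing g] [LieAlgebra F g] [LieRing ghat] [LieAlgebra F ghat]

/-- A Lie algebra admitting a universal central extension structure over `g` is perfect. -/
lemma perfect_of_uce (q : ghat →ₗ⁅F⁆ g) (hqsurj : Function.Surjective q)
    (hqcent : q.ker ≤ LieAlgebra.center F ghat)
    (huniv : ∀ (E : Type u) [LieRing E] [LieAlgebra F E] (π : E →ₗ⁅F⁆ g),
      Function.Surjective π → π.ker ≤ LieAlgebra.center F E →
        ∃! ψ : ghat →ₗ⁅F⁆ E, π.comp ψ = q) :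
    LieAlgebra.derivedSeries F ghat 1 = ⊤ := by
  set I : LieIdeal F ghat := LieAlgebra.derivedSeries F ghat 1 with hI
  -- the quotient is an abelian Lie algebra and a trivial `ghat`-module
  have hbr : ∀ (x z : ghat), ⁅x, z⁆ ∈ I := by
    intro x z
    rw [hI]
    simp only [LieAlgebra.derivedSeries_def, LieAlgebra.derivedSeriesOfIdeal_succ,
      LieAlgebra.derivedSeriesOfIdeal_zero]
    exact LieSubmodule.lie_mem_lie (LieSubmodule.mem_top _) (LieSubmodule.mem_top _)
  have htriv : ∀ (x : ghat) (a : ghat ⧸ I), ⁅x, a⁆ = 0 := by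
    intro x a
    obtain ⟨z, rfl⟩ := lieQuotMk_surjective I a
    have : ⁅x, lieQuotMk I z⁆ = lieQuotMk I ⁅x, z⁆ := rfl
    rw [this, lieQuotMk_eq_zero]
    exact hbr x z
  -- the semidirect product `E = ghat ⋉ (ghat ⧸ I)`, with projection to `g`
  let π : (ghat × (ghat ⧸ I)) →ₗ⁅F⁆ g := q.comp (sdFst F ghat (ghat ⧸ I))
  have hπs : Function.Surjective π := fun y => by
    obtain ⟨x, hx⟩ := hqsurj y
    exact ⟨(x, 0), hx⟩
  have hπc : π.ker ≤ LieAlgebra.center F (ghat × (ghat ⧸ I)) := by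
    intro e he
    rw [LieHom.mem_ker] at he
    have he1 : e.1 ∈ LieAlgebra.center F ghat := hqcent (LieHom.mem_ker.mpr he)
    rw [LieModule.mem_maxTrivSubmodule] at he1 ⊢
    intro x
    apply Prod.ext
    · exact he1 x.1
    · simp only [sd_bracket_snd, htriv x.1 e.2, htriv e.1 x.2, sub_zero]
      rfl
  obtain ⟨ψ, hψ, huniq⟩ := huniv _ π hπs hπc
  let ψ₁ : ghat →ₗ⁅F⁆ ghat × (ghat ⧸ I) :=
    { LinearMap.prod LinearMap.id 0 with
      map_lie' := by
        intro x y
        apply Prod.ext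
        · rfl
        · show (0 : ghat ⧸ I) = ⁅x, (0 : ghat ⧸ I)⁆ - ⁅y, (0 : ghat ⧸ I)⁆
          simp }
  let ψ₂ : ghat →ₗ⁅F⁆ ghat × (ghat ⧸ I) :=
    { LinearMap.prod LinearMap.id (lieQuotMk I).toLinearMap with
      map_lie' := by
        intro x y
        apply Prod.ext
        · rfl
        · show lieQuotMk I ⁅x, y⁆ = ⁅x, lieQuotMk I y⁆ - ⁅y, lieQuotMk I x⁆
          rw [htriv, htriv, sub_zero, lieQuotMk_eq_zero]
          exact hbr x y }
  have h1 : π.comp ψ₁ = q := by ext x; rfl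
  have h2 : π.comp ψ₂ = q := by ext x; rfl
  have h12 : ψ₁ = ψ₂ := (huniq ψ₁ h1).trans (huniq ψ₂ h2).symm
  rw [eq_top_iff]
  intro x _
  rw [← lieQuotMk_eq_zero I]
  have := congrArg Prod.snd (LieHom.congr_fun h12 x)
  exact this.symm.trans rfl

end Perfect

section Lift

variable {F : Type u} {g ghat : Type u} [Field F]
  [LieRing g] [LieAlgebra F g] [LieRing ghat] [LieAlgebra F ghat]

lemma exists_derivation_lift (q : ghat →ₗ⁅F⁆ g) (hqsurj : Function.Surjective q)
    (hqcent : q.ker ≤ LieAlgebra.center F ghat)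
    (huniv : ∀ (E : Type u) [LieRing E] [LieAlgebra F E] (π : E →ₗ⁅F⁆ g),
      Function.Surjective π → π.ker ≤ LieAlgebra.center F E →
        ∃! ψ : ghat →ₗ⁅F⁆ E, π.comp ψ = q)
    (C : LieIdeal F ghat) (hC : C ≤ LieAlgebra.center F ghat)
    (D : LieDerivation F (ghat ⧸ C) (ghat ⧸ C)) :
    ∃ Dh : LieDerivation F ghat ghat, ∀ x, lieQuotMk C (Dh x) = D (lieQuotMk C x) := by
  have hperf := perfect_of_uce q hqsurj hqcent huniv
  set p : ghat →ₗ⁅F⁆ ghat ⧸ C := lieQuotMk C with hpdef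
  have hps : Function.Surjective p := lieQuotMk_surjective C
  -- the graph subalgebra `W ⊆ ghat ⋉ ghat`
  let fD : (ghat × ghat) →ₗ[F] (ghat ⧸ C) :=
    (D.toLinearMap.comp (p.toLinearMap.comp (LinearMap.fst F ghat ghat))) -
      (p.toLinearMap.comp (LinearMap.snd F ghat ghat))
  have memfD : ∀ w : ghat × ghat, w ∈ LinearMap.ker fD ↔ D (p w.1) = p w.2 := by
    intro w
    simp only [fD, LinearMap.mem_ker, LinearMap.sub_apply, LinearMap.coe_comp,
      Function.comp_apply, LinearMap.fst_apply, LinearMap.snd_apply,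
      LieHom.coe_toLinearMap, LieDerivation.coeFn_coe, sub_eq_zero]
  let W : LieSubalgebra F (ghat × ghat) :=
    { LinearMap.ker fD with
      lie_mem' := by
        intro x y hx hy
        have hx' : D (p x.1) = p x.2 := (memfD x).mp hx
        have hy' : D (p y.1) = p y.2 := (memfD y).mp hy
        show ⁅x, y⁆ ∈ LinearMap.ker fD
        rw [memfD]
        simp only [sd_bracket_fst, sd_bracket_snd, LieHom.map_lie, map_sub,
          LieDerivation.apply_lie_eq_sub, hx', hy'] }
  have memW : ∀ w : ghat × ghat, w ∈ W ↔ D (p w.1) = p w.2 := memfD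
  let τ : W →ₗ⁅F⁆ ghat := (sdFst F ghat ghat).comp W.incl
  have hτ_apply : ∀ w : W, τ w = (w : ghat × ghat).1 := fun w => rfl
  have hτs : Function.Surjective τ := by
    intro x
    obtain ⟨u, hu⟩ := hps (D (p x))
    exact ⟨⟨(x, u), (memW (x, u)).mpr hu.symm⟩, rfl⟩
  set W' : LieIdeal F W := LieAlgebra.derivedSeries F W 1 with hW'def
  let ρ : W' →ₗ⁅F⁆ ghat := τ.comp W'.incl
  have hρ_apply : ∀ e : W', ρ e = ((e : W) : ghat × ghat).1 := fun e => rfl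
  have hρs : Function.Surjective ρ := by
    have hmap : LieIdeal.map τ (LieAlgebra.derivedSeries F W 1) =
        LieAlgebra.derivedSeries F ghat 1 := LieIdeal.derivedSeries_map_eq 1 hτs
    intro x
    have hx : x ∈ LieIdeal.map τ (LieAlgebra.derivedSeries F W 1) := by
      rw [hmap, hperf]; trivial
    obtain ⟨w, hw⟩ := LieIdeal.mem_map_of_surjective hτs hx
    exact ⟨w, hw⟩
  let π : W' →ₗ⁅F⁆ g := q.comp ρ
  have hπs : Function.Surjective π := hqsurj.comp hρs
  -- the kernel of `π` is central in `W'`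
  have hπc : π.ker ≤ LieAlgebra.center F W' := by
    intro e he
    rw [LieHom.mem_ker] at he
    set w : W := (e : W) with hwdef
    have hqw : q ((w : ghat × ghat).1) = 0 := he
    have hcent1 : ∀ z : ghat, ⁅z, (w : ghat × ghat).1⁆ = 0 := by
      have := hqcent (LieHom.mem_ker.mpr hqw)
      rwa [LieModule.mem_maxTrivSubmodule] at this
    have hcent1' : ∀ z : ghat, ⁅(w : ghat × ghat).1, z⁆ = 0 := fun z => by
      rw [← lie_skew, hcent1, neg_zero]
    have hpx : ∀ l : ghat ⧸ C, ⁅l, p ((w : ghat × ghat).1)⁆ = 0 := by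
      intro l
      obtain ⟨z, rfl⟩ := hps l
      rw [← p.map_lie, hcent1, map_zero p]
    have hpx' : ∀ l : ghat ⧸ C, ⁅p ((w : ghat × ghat).1), l⁆ = 0 := fun l => by
      rw [← lie_skew, hpx, neg_zero]
    have hDpx : ∀ l : ghat ⧸ C, ⁅l, D (p ((w : ghat × ghat).1))⁆ = 0 := by
      intro l
      have h1 := D.apply_lie_eq_sub l (p ((w : ghat × ghat).1))
      rw [hpx l, map_zero] at h1
      have h2 : ⁅p ((w : ghat × ghat).1), D l⁆ = 0 := hpx' (D l)
      rw [h2, sub_zero] at h1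
      exact h1.symm
    have hkeyc : ∀ a b : W, ⁅⁅w, a⁆, b⁆ = 0 := by
      intro a b
      apply Subtype.ext
      show ⁅⁅(w : ghat × ghat), (a : ghat × ghat)⁆, (b : ghat × ghat)⁆ = 0
      have hc2 : ⁅(w : ghat × ghat), (a : ghat × ghat)⁆.2 ∈ C := by
        rw [← lieQuotMk_eq_zero C]
        show p _ = 0
        rw [sd_bracket_snd, map_sub p, p.map_lie, p.map_lie]
        have hw2 : p ((w : ghat × ghat).2) = D (p ((w : ghat × ghat).1)) :=
          ((memW _).mp w.2).symm
        rw [hw2, hpx' (p ((a : ghat × ghat).2)), zero_sub,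
          hDpx (p ((a : ghat × ghat).1)), neg_zero]
      have hc1 : ⁅(w : ghat × ghat), (a : ghat × ghat)⁆.1 = 0 := hcent1' _
      apply Prod.ext
      · rw [sd_bracket_fst, hc1, zero_lie]; rfl
      · have hcen := hC hc2
        rw [LieModule.mem_maxTrivSubmodule] at hcen
        rw [sd_bracket_snd, hc1, zero_lie, zero_sub, hcen ((b : ghat × ghat).1), neg_zero]
        rfl
    have hz : ∀ v : W, v ∈ W' → ⁅w, v⁆ = 0 := by
      intro v hv
      have hW1 : W' = ⁅(⊤ : LieIdeal F W), (⊤ : LieIdeal F W)⁆ := by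
        rw [hW'def]
        simp [LieAlgebra.derivedSeries_def]
      rw [hW1] at hv
      have hv' : v ∈ LieSubmodule.toSubmodule
          (⁅(⊤ : LieIdeal F W), (⊤ : LieIdeal F W)⁆ : LieIdeal F W) := hv
      rw [LieSubmodule.lieIdeal_oper_eq_linear_span'] at hv'
      refine Submodule.span_induction ?_ ?_ ?_ ?_ hv'
      · rintro m ⟨a, -, b, -, rfl⟩
        rw [leibniz_lie, hkeyc a b, zero_add, ← lie_skew, hkeyc, neg_zero]
      · exact lie_zero w
      · intro a b ha hb hA hB
        rw [lie_add, hA, hB, add_zero]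
      · intro t a ha hA
        rw [lie_smul, hA, smul_zero]
    rw [LieModule.mem_maxTrivSubmodule]
    intro e'
    apply Subtype.ext
    show ⁅(e' : W), w⁆ = (0 : W)
    rw [← lie_skew, hz (e' : W) e'.2, neg_zero]
  -- apply the universal property
  obtain ⟨ψ, hψ, -⟩ := huniv W' π hπs hπc
  obtain ⟨χ, hχ, hχu⟩ := huniv ghat q hqsurj hqcent
  have hθq : q.comp (ρ.comp ψ) = q := by
    ext x
    exact LieHom.congr_fun hψ x
  have hid : q.comp (LieHom.id : ghat →ₗ⁅F⁆ ghat) = q := by ext x; rfl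
  have hθ_id : ρ.comp ψ = (LieHom.id : ghat →ₗ⁅F⁆ ghat) :=
    (hχu _ hθq).trans (hχu _ hid).symm
  have hfst : ∀ x : ghat, (((ψ x : W) : ghat × ghat)).1 = x := by
    intro x
    exact LieHom.congr_fun hθ_id x
  have hsnd_mem : ∀ x : ghat, D (p x) = p (((ψ x : W) : ghat × ghat)).2 := by
    intro x
    have := (memW ((ψ x : W) : ghat × ghat)).mp (ψ x : W).2
    rwa [hfst x] at this
  -- assemble the derivation
  refine ⟨{ toFun := fun x => (((ψ x : W) : ghat × ghat)).2
            map_add' := by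
              intro x y
              show (((ψ (x + y) : W) : ghat × ghat)).2 = _
              rw [map_add ψ]; rfl
            map_smul' := by
              intro t x
              show (((ψ (t • x) : W) : ghat × ghat)).2 =
                t • (((ψ x : W) : ghat × ghat)).2
              rw [map_smul ψ]; rfl
            leibniz' := ?_ }, ?_⟩
  · intro a b
    have hlie : ((ψ ⁅a, b⁆ : W) : ghat × ghat) =
        ⁅((ψ a : W) : ghat × ghat), ((ψ b : W) : ghat × ghat)⁆ := by
      rw [ψ.map_lie]; rfl
    show ((ψ ⁅a, b⁆ : W) : ghat × ghat).2 = _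
    rw [hlie, sd_bracket_snd, hfst a, hfst b]
    rfl
  · intro x
    exact (hsnd_mem x).symm

end Lift

section Main

/-- Quotient by the kernel of a surjective Lie algebra morphism. -/
noncomputable def lieQuotKerEquiv {R L L' : Type*} [CommRing R] [LieRing L] [LieAlgebra R L]
    [LieRing L'] [LieAlgebra R L'] (f : L →ₗ⁅R⁆ L') (hf : Function.Surjective f) :
    (L ⧸ f.ker) ≃ₗ⁅R⁆ L' :=
  f.quotKerEquivRange.trans
    ((LieEquiv.ofEq _ _ (by rw [(LieHom.range_eq_top f).mpr hf])).trans
      LieSubalgebra.topEquiv)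

/-- Let `g` be a simple Lie algebra with universal central extension `q : ĝ → g`, and let
`C` be a central ideal of `ĝ` such that the only derivations of `ĝ` mapping `C` into `C`
are the inner derivations.  Then `Der(ĝ/C)` is a simple Lie algebra isomorphic to `g`. -/
theorem stmt13 (F : Type u) [Field F]
    (g ghat : Type u) [LieRing g] [LieAlgebra F g] [LieRing ghat] [LieAlgebra F ghat]
    (hsimple : LieAlgebra.IsSimple F g)
    -- `q : ĝ → g` is a central extension
    (q : ghat →ₗ⁅F⁆ g) (hqsurj : Function.Surjective q)
    (hqcent : q.ker ≤ LieAlgebra.center F ghat)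
    -- ... which is universal
    (huniv : ∀ (E : Type u) [LieRing E] [LieAlgebra F E] (π : E →ₗ⁅F⁆ g),
      Function.Surjective π → π.ker ≤ LieAlgebra.center F E →
        ∃! ψ : ghat →ₗ⁅F⁆ E, π.comp ψ = q)
    -- `C` is a central ideal of `ĝ`
    (C : LieIdeal F ghat) (hC : C ≤ LieAlgebra.center F ghat)
    -- every derivation of `ĝ` mapping `C` into `C` is inner
    (hstab : ∀ D : LieDerivation F ghat ghat, (∀ x ∈ C, D x ∈ C) →
      ∃ y : ghat, D = LieDerivation.ad F ghat y) :
    LieAlgebra.IsSimple F (LieDerivation F (ghat ⧸ C) (ghat ⧸ C)) ∧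
      Nonempty (LieDerivation F (ghat ⧸ C) (ghat ⧸ C) ≃ₗ⁅F⁆ g) := by
  haveI := hsimple
  have hcg : LieAlgebra.center F g = ⊥ := LieAlgebra.center_eq_bot F g
  set p : ghat →ₗ⁅F⁆ ghat ⧸ C := lieQuotMk C with hpdef
  have hps : Function.Surjective p := lieQuotMk_surjective C
  -- `q` kills central elements
  have hqc : ∀ x : ghat, (∀ z : ghat, ⁅z, x⁆ = 0) → q x = 0 := by
    intro x hx
    have : q x ∈ LieAlgebra.center F g := by
      rw [LieModule.mem_maxTrivSubmodule]
      intro w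
      obtain ⟨z, rfl⟩ := hqsurj w
      rw [← q.map_lie, hx z, map_zero q]
    rw [hcg] at this
    simpa using this
  have hCq : ∀ c ∈ C, q c = 0 := by
    intro c hc
    refine hqc c ?_
    have := hC hc
    rwa [LieModule.mem_maxTrivSubmodule] at this
  -- the adjoint morphism
  set Φ : ghat →ₗ⁅F⁆ LieDerivation F (ghat ⧸ C) (ghat ⧸ C) :=
    (LieDerivation.ad F (ghat ⧸ C)).comp p with hΦdef
  have hadap : ∀ (a b : ghat ⧸ C), (LieDerivation.ad F (ghat ⧸ C) a) b = ⁅a, b⁆ := by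
    intro a b
    simp
  -- surjectivity of `Φ`
  have hΦs : Function.Surjective Φ := by
    intro D
    obtain ⟨Dh, hDh⟩ := exists_derivation_lift q hqsurj hqcent huniv C hC D
    have hDhC : ∀ x ∈ C, Dh x ∈ C := by
      intro x hx
      rw [← lieQuotMk_eq_zero C]
      have hx0 : lieQuotMk C x = 0 := (lieQuotMk_eq_zero C).mpr hx
      rw [hDh x, hx0]
      simp
    obtain ⟨y, hy⟩ := hstab Dh hDhC
    refine ⟨y, ?_⟩
    apply LieDerivation.ext
    intro l
    obtain ⟨z, rfl⟩ := hps l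
    have h1 : Φ y (p z) = ⁅p y, p z⁆ := hadap (p y) (p z)
    have h2 : Dh z = ⁅y, z⁆ := by rw [hy]; simp
    rw [h1, ← p.map_lie, ← h2, hDh z]
  -- kernels agree
  have hker : Φ.ker = q.ker := by
    ext x
    rw [LieHom.mem_ker, LieHom.mem_ker]
    constructor
    · intro hx
      have key : ∀ z : ghat, q ⁅z, x⁆ = 0 := by
        intro z
        have h0 : ⁅p x, p z⁆ = 0 := by
          have h1 : (Φ x) (p z) = ⁅p x, p z⁆ := hadap (p x) (p z)
          rw [hx] at h1
          simpa using h1.symm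
        have hm : p ⁅z, x⁆ = 0 := by
          rw [p.map_lie, ← lie_skew, h0, neg_zero]
        exact hCq _ ((lieQuotMk_eq_zero C).mp hm)
      have hqx : q x ∈ LieAlgebra.center F g := by
        rw [LieModule.mem_maxTrivSubmodule]
        intro w
        obtain ⟨z, rfl⟩ := hqsurj w
        rw [← q.map_lie, key z]
      rw [hcg] at hqx
      simpa using hqx
    · intro hx
      have hcent := hqcent (LieHom.mem_ker.mpr hx)
      rw [LieModule.mem_maxTrivSubmodule] at hcent
      apply LieDerivation.ext
      intro l
      obtain ⟨z, rfl⟩ := hps l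
      have : (Φ x) (p z) = ⁅p x, p z⁆ := hadap (p x) (p z)
      rw [this, ← p.map_lie]
      have hxz : ⁅x, z⁆ = 0 := by rw [← lie_skew, hcent z, neg_zero]
      rw [hxz, map_zero p]
      rfl
  -- the isomorphism
  have e1 : (ghat ⧸ Φ.ker) ≃ₗ⁅F⁆ LieDerivation F (ghat ⧸ C) (ghat ⧸ C) :=
    lieQuotKerEquiv Φ hΦs
  have e2 : (ghat ⧸ q.ker) ≃ₗ⁅F⁆ g := lieQuotKerEquiv q hqsurj
  rw [hker] at e1
  have iso : LieDerivation F (ghat ⧸ C) (ghat ⧸ C) ≃ₗ⁅F⁆ g := e1.symm.trans e2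
  exact ⟨lieIsSimple_of_equiv iso hsimple, ⟨iso⟩⟩

end Main
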